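/- Let A ∈ V_0 ⊗ ⋯ ⊗ V_p be a (p+1)-dimensional matrix of boundary format. Then A is nondegenerate if and only if there is no (p+1)-tuple (x_0, x_1, …, x_p) of nonzero functionals x_i ∈ V_i^∨ such that for every j ∈ {0, …, p} the contraction A(x_0, …, x_{j-1}, ·, x_{j+1}, …, x_p) is the zero linear form on V_j^∨ (i.e. the Segre product has no 'singular point' for A; this is the characterization Det A ≠ 0 ⟺ all the morphisms f_A^{(j)} are surjective). -/

import Mathlib

open Module Finset

variable {p : ℕ} {V : Fin (p + 1) → Type*}
  [∀ j, AddCommGroup (V j)] [∀ j, Module ℂ (V j)] [∀ j, FiniteDimensional ℂ (V j)]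

/-- A `(p+1)`-dimensional matrix `A ∈ V 0 ⊗ ⋯ ⊗ V p`, viewed as a multilinear form on the
duals, is *nondegenerate* if for every `j ≠ 0` and every choice of nonzero functionals
`ξ i ∈ (V i)^∨` (for `i ∉ {0, j}`), the induced linear map `(V 0)^∨ → V j`,
`φ ↦ (the vector `v` with `lam v = A(φ, ξ₁, …, lam, …, ξ_p)` for all `lam`)`, is surjective. -/
def TensorNondegenerate (A : MultilinearMap ℂ (fun j : Fin (p + 1) => Module.Dual ℂ (V j)) ℂ) :
    Prop :=
  ∀ j : Fin (p + 1), j ≠ 0 →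
    ∀ ξ : ∀ i, Module.Dual ℂ (V i), (∀ i, i ≠ 0 → i ≠ j → ξ i ≠ 0) →
      ∀ v : V j, ∃ φ : Module.Dual ℂ (V 0),
        ∀ lam : Module.Dual ℂ (V j),
          A (Function.update (Function.update ξ 0 φ) j lam) = lam v

/-- The linear map `(V 0)^∨ →ₗ V i` obtained from `A` by fixing the functionals `x` in all
slots other than `0` and `i`. -/
private noncomputable def auxMap
    (A : MultilinearMap ℂ (fun j : Fin (p + 1) => Module.Dual ℂ (V j)) ℂ)
    (x : ∀ i, Module.Dual ℂ (V i)) (i : Fin (p + 1)) (hi : i ≠ 0) :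
    Module.Dual ℂ (V 0) →ₗ[ℂ] V i where
  toFun φ := (Module.evalEquiv ℂ (V i)).symm
    { toFun := fun lam => A (Function.update (Function.update x 0 φ) i lam)
      map_add' := fun a b => A.map_update_add _ i a b
      map_smul' := fun c a => A.map_update_smul _ i c a }
  map_add' φ ψ := by
    rw [← map_add]
    refine congrArg _ (LinearMap.ext fun lam => ?_)
    simp only [LinearMap.coe_mk, AddHom.coe_mk, LinearMap.add_apply]
    rw [Function.update_comm hi.symm φ lam x, Function.update_comm hi.symm ψ lam x,
      Function.update_comm hi.symm (φ + ψ) lam x]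
    exact A.map_update_add _ 0 φ ψ
  map_smul' c φ := by
    rw [RingHom.id_apply]
    refine Eq.trans (congrArg (Module.evalEquiv ℂ (V i)).symm (LinearMap.ext fun lam => ?_))
      ((Module.evalEquiv ℂ (V i)).symm.map_smul c _)
    simp only [LinearMap.coe_mk, AddHom.coe_mk, LinearMap.smul_apply, smul_eq_mul]
    rw [Function.update_comm hi.symm φ lam x, Function.update_comm hi.symm (c • φ) lam x]
    exact A.map_update_smul _ 0 c φ

private theorem auxMap_apply
    (A : MultilinearMap ℂ (fun j : Fin (p + 1) => Module.Dual ℂ (V j)) ℂ)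
    (x : ∀ i, Module.Dual ℂ (V i)) (i : Fin (p + 1)) (hi : i ≠ 0)
    (φ : Module.Dual ℂ (V 0)) (lam : Module.Dual ℂ (V i)) :
    lam (auxMap A x i hi φ) = A (Function.update (Function.update x 0 φ) i lam) := by
  simp [auxMap, Module.apply_evalEquiv_symm_apply]

/-- Intersecting finitely many submodules drops the dimension by at most the sum of the
codimensions. -/
private theorem finrank_iInf_ge {W : Type*} [AddCommGroup W] [Module ℂ W]
    [FiniteDimensional ℂ W] {ι : Type*} (s : Finset ι) (U : ι → Submodule ℂ W) (d : ι → ℕ)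
    (h : ∀ i ∈ s, finrank ℂ W ≤ finrank ℂ (U i) + d i) :
    finrank ℂ W ≤ finrank ℂ ↥(⨅ i ∈ s, U i) + ∑ i ∈ s, d i := by
  classical
  induction s using Finset.induction with
  | empty =>
    have he : (⨅ i ∈ (∅ : Finset ι), U i) = ⊤ := by simp
    rw [he, finrank_top]
    simp
  | @insert a s ha ih =>
    rw [Finset.iInf_insert, Finset.sum_insert ha]
    set T : Submodule ℂ W := ⨅ i ∈ s, U i with hT
    have e1 := Submodule.finrank_sup_add_finrank_inf_eq (U a) T
    have e2 : finrank ℂ ↥(U a ⊔ T) ≤ finrank ℂ W := Submodule.finrank_le _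
    have e3 := h a (Finset.mem_insert_self a s)
    have e4 := ih fun i hi => h i (Finset.mem_insert_of_mem hi)
    omega

theorem nondegenerate_iff_no_singular_point
    (hp : 2 ≤ p) (k : Fin (p + 1) → ℕ) (hk : ∀ j, 1 ≤ k j)
    (hdim : ∀ j, Module.finrank ℂ (V j) = k j + 1)
    (hbf : k 0 = ∑ j ∈ Finset.univ.erase (0 : Fin (p + 1)), k j)
    (A : MultilinearMap ℂ (fun j : Fin (p + 1) => Module.Dual ℂ (V j)) ℂ) :
    TensorNondegenerate A ↔
      ¬ ∃ x : ∀ i, Module.Dual ℂ (V i), (∀ i, x i ≠ 0) ∧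
        ∀ j : Fin (p + 1), ∀ lam : Module.Dual ℂ (V j),
          A (Function.update x j lam) = 0 := by
  classical
  constructor
  · -- nondegenerate → no singular point
    rintro hnd ⟨x, hx, hsing⟩
    have hj : (1 : Fin (p + 1)) ≠ 0 := by
      intro hcontr
      have h1 : ((1 : Fin (p + 1)) : ℕ) = 1 % (p + 1) := rfl
      have h2 : 1 % (p + 1) = 1 := Nat.mod_eq_of_lt (by omega)
      have := congrArg Fin.val hcontr
      rw [h1, h2] at this
      simp at this
    -- choose v with x 1 v ≠ 0
    obtain ⟨v, hv⟩ : ∃ v : V 1, x 1 v ≠ 0 := by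
      by_contra hcon
      push_neg at hcon
      exact hx 1 (LinearMap.ext fun w => hcon w)
    obtain ⟨φ, hφ⟩ := hnd 1 hj x (fun i _ _ => hx i) v
    have h1 := hφ (x 1)
    have h2 : Function.update (Function.update x 0 φ) 1 (x 1) = Function.update x 0 φ := by
      have : x 1 = (Function.update x 0 φ) 1 := (Function.update_of_ne hj φ x).symm
      rw [this, Function.update_eq_self]
    rw [h2, hsing 0 φ] at h1
    exact hv h1.symm
  · -- no singular point → nondegenerate
    intro h j hj ξ hξ v
    by_contra hcon
    push_neg at hcon
    set g : Module.Dual ℂ (V 0) →ₗ[ℂ] V j := auxMap A ξ j hj with hg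
    have hvr : v ∉ LinearMap.range g := by
      rintro ⟨φ, rfl⟩
      obtain ⟨lam, hlam⟩ := hcon φ
      exact hlam (auxMap_apply A ξ j hj φ lam).symm
    obtain ⟨μ, hμv, hμ⟩ := (LinearMap.range g).exists_dual_map_eq_bot_of_notMem hvr inferInstance
    have hμ0 : μ ≠ 0 := fun h0 => hμv (by simp [h0])
    have hμker : ∀ w ∈ LinearMap.range g, μ w = 0 := by
      intro w hw
      have hmem : μ w ∈ Submodule.map μ (LinearMap.range g) := ⟨w, hw, rfl⟩
      rw [hμ] at hmem
      simpa using hmem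
    set x' : ∀ i, Module.Dual ℂ (V i) := Function.update ξ j μ with hx'
    -- the contraction in slot 0 vanishes
    have h0 : ∀ φ : Module.Dual ℂ (V 0), A (Function.update x' 0 φ) = 0 := by
      intro φ
      have hcomm : Function.update x' 0 φ =
          Function.update (Function.update ξ 0 φ) j μ := by
        rw [hx', Function.update_comm hj.symm]
      rw [hcomm, ← auxMap_apply A ξ j hj φ μ]
      exact hμker _ ⟨φ, rfl⟩
    -- all the entries of x' (away from slot 0) are nonzero
    have hx'ne : ∀ i, i ≠ 0 → x' i ≠ 0 := by
      intro i hi0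
      by_cases hij : i = j
      · subst hij; simpa [hx'] using hμ0
      · simpa [hx', Function.update_of_ne hij] using hξ i hi0 hij
    -- the dimension count
    set N := finrank ℂ (Module.Dual ℂ (V 0)) with hN
    have hNval : N = k 0 + 1 := by rw [hN, Subspace.dual_finrank_eq, hdim 0]
    have hrank : ∀ i (hi : i ≠ 0),
        N ≤ finrank ℂ ↥(LinearMap.ker (auxMap A x' i hi)) + k i := by
      intro i hi
      set f := auxMap A x' i hi with hf
      have hrange : LinearMap.range f ≤ LinearMap.ker (x' i) := by
        rintro _ ⟨φ, rfl⟩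
        have hupd : Function.update (Function.update x' 0 φ) i (x' i) =
            Function.update x' 0 φ := by
          have : x' i = (Function.update x' 0 φ) i := (Function.update_of_ne hi φ x').symm
          rw [this, Function.update_eq_self]
        rw [LinearMap.mem_ker,
          show x' i (f φ) = A (Function.update (Function.update x' 0 φ) i (x' i)) from
            auxMap_apply A x' i hi φ (x' i), hupd, h0]
      -- `x' i` is a nonzero functional, so its kernel has dimension `k i`
      obtain ⟨w, hw⟩ : ∃ w : V i, x' i w ≠ 0 := by
        by_contra hcon'
        push_neg at hcon'
        exact hx'ne i hi (LinearMap.ext fun w => hcon' w)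
      have hsurj : LinearMap.range (x' i) = ⊤ := by
        rw [LinearMap.range_eq_top]
        intro c
        exact ⟨(c / x' i w) • w, by rw [map_smul, smul_eq_mul, div_mul_cancel₀ _ hw]⟩
      have e1 : finrank ℂ ↥(LinearMap.range f) + finrank ℂ ↥(LinearMap.ker f) = N :=
        LinearMap.finrank_range_add_finrank_ker f
      have e2 : finrank ℂ ↥(LinearMap.range f) ≤ finrank ℂ ↥(LinearMap.ker (x' i)) :=
        Submodule.finrank_mono hrange
      have e3 : finrank ℂ ↥(LinearMap.range (x' i)) + finrank ℂ ↥(LinearMap.ker (x' i)) =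
          k i + 1 := by
        rw [LinearMap.finrank_range_add_finrank_ker (x' i), hdim i]
      have e4 : finrank ℂ ↥(LinearMap.range (x' i)) = 1 := by
        rw [hsurj, finrank_top, Module.finrank_self]
      omega
    -- intersect the kernels
    set U : Fin (p + 1) → Submodule ℂ (Module.Dual ℂ (V 0)) := fun i =>
      if hi : i = 0 then ⊤ else LinearMap.ker (auxMap A x' i hi) with hU
    have hfin : N ≤ finrank ℂ ↥(⨅ i ∈ Finset.univ.erase (0 : Fin (p + 1)), U i) +
        ∑ i ∈ Finset.univ.erase (0 : Fin (p + 1)), k i := by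
      apply finrank_iInf_ge
      intro i hi
      have hi0 : i ≠ 0 := (Finset.mem_erase.mp hi).1
      have hUi : U i = LinearMap.ker (auxMap A x' i hi0) := dif_neg hi0
      rw [hUi]
      exact hrank i hi0
    rw [← hbf] at hfin
    have hpos : (⨅ i ∈ Finset.univ.erase (0 : Fin (p + 1)), U i) ≠ ⊥ := by
      intro hbot
      rw [hbot, finrank_bot] at hfin
      omega
    obtain ⟨x0, hx0mem, hx0ne⟩ := Submodule.exists_mem_ne_zero_of_ne_bot hpos
    simp only [Submodule.mem_iInf] at hx0mem
    -- assemble the singular point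
    refine h ⟨Function.update x' 0 x0, fun i => ?_, fun j' lam => ?_⟩
    · by_cases hi0 : i = 0
      · subst hi0; simpa using hx0ne
      · rw [Function.update_of_ne hi0]; exact hx'ne i hi0
    · by_cases hj'0 : j' = 0
      · subst hj'0
        rw [Function.update_idem]
        exact h0 lam
      · have hker : auxMap A x' j' hj'0 x0 = 0 := by
          have := hx0mem j' (Finset.mem_erase.mpr ⟨hj'0, Finset.mem_univ j'⟩)
          rw [hU] at this
          simpa [dif_neg hj'0, LinearMap.mem_ker] using this
        have := auxMap_apply A x' j' hj'0 x0 lam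
        rw [hker, map_zero] at this
        exact this.symm
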